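/- Let t ≥ 3 be a real number. Then for every real a ≥ 0 one has (1+a)^t ≥ 1 + a^t + t·a + t·a^{t-1}. -/

import Mathlib

open Real

private lemma bern_mono {p : ℝ} (_hp : 1 ≤ p) (P : ℝ → ℝ) (P' : ℝ → ℝ)
    (hP : ∀ x, HasDerivAt P (P' x) x)
    (hP' : ∀ x, 0 ≤ x → P' x ≤ p * (1 + x) ^ (p - 1)) (hP0 : P 0 ≤ 1)
    {a : ℝ} (ha : 0 ≤ a) : P a ≤ (1 + a) ^ p := by
  set F : ℝ → ℝ := fun x => (1 + x) ^ p - P x with hF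
  have hd : ∀ x : ℝ, 0 ≤ x →
      HasDerivAt F (p * (1 + x) ^ (p - 1) - P' x) x := by
    intro x hx
    have h1 : HasDerivAt (fun x : ℝ => (1 + x) ^ p)
        (p * (1 + x) ^ (p - 1) * 1) x := by
      have hpos : (1 : ℝ) + x ≠ 0 := by positivity
      exact (Real.hasDerivAt_rpow_const (Or.inl hpos)).comp x
        ((hasDerivAt_id x).const_add 1)
    have h2 := h1.sub (hP x); rw [mul_one] at h2; exact h2
  have hmono : MonotoneOn F (Set.Ici 0) := by
    apply monotoneOn_of_deriv_nonneg (convex_Ici 0)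
    · intro x hx
      exact ((hd x hx).continuousAt).continuousWithinAt
    · intro x hx
      rw [interior_Ici] at hx
      exact ((hd x hx.le).differentiableAt).differentiableWithinAt
    · intro x hx
      rw [interior_Ici] at hx
      rw [(hd x hx.le).deriv]
      have := hP' x hx.le
      linarith
  have h0 : (0 : ℝ) ≤ F 0 := by
    simp only [hF, add_zero, Real.one_rpow]
    linarith
  have := hmono (Set.self_mem_Ici) (Set.mem_Ici.2 ha) ha
  simp only [hF, add_zero, Real.one_rpow] at this
  linarith

private lemma bern2 {p : ℝ} (hp : 2 ≤ p) {a : ℝ} (ha : 0 ≤ a) :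
    1 + p * a + p * (p - 1) / 2 * a ^ 2 ≤ (1 + a) ^ p := by
  have hp1 : 1 ≤ p := by linarith
  refine bern_mono hp1 (fun x => 1 + p * x + p * (p - 1) / 2 * x ^ 2)
    (fun x => p + p * (p - 1) * x) (fun x => ?_) (fun x hx => ?_) (by norm_num) ha
  · have h := (((hasDerivAt_id' (x := x)).const_mul p).const_add 1).add
      ((hasDerivAt_pow 2 x).const_mul (p * (p - 1) / 2))
    refine h.congr_deriv ?_
    push_cast; ring
  · show p + p * (p - 1) * x ≤ p * (1 + x) ^ (p - 1)
    have hB := one_add_mul_self_le_rpow_one_add (s := x) (by linarith)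
      (p := p - 1) (by linarith)
    nlinarith [hB]

private lemma bern3 {p : ℝ} (hp : 3 ≤ p) {a : ℝ} (ha : 0 ≤ a) :
    1 + p * a + p * (p - 1) / 2 * a ^ 2 + p * (p - 1) * (p - 2) / 6 * a ^ 3
      ≤ (1 + a) ^ p := by
  have hp1 : 1 ≤ p := by linarith
  refine bern_mono hp1
    (fun x => 1 + p * x + p * (p - 1) / 2 * x ^ 2 + p * (p - 1) * (p - 2) / 6 * x ^ 3)
    (fun x => p + p * (p - 1) * x + p * (p - 1) * (p - 2) / 2 * x ^ 2)
    (fun x => ?_) (fun x hx => ?_) (by norm_num) ha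
  · have h := ((((hasDerivAt_id' (x := x)).const_mul p).const_add 1).add
      ((hasDerivAt_pow 2 x).const_mul (p * (p - 1) / 2))).add
      ((hasDerivAt_pow 3 x).const_mul (p * (p - 1) * (p - 2) / 6))
    refine h.congr_deriv ?_
    push_cast; ring
  · show p + p * (p - 1) * x + p * (p - 1) * (p - 2) / 2 * x ^ 2
      ≤ p * (1 + x) ^ (p - 1)
    have hB := bern2 (p := p - 1) (by linarith) hx
    have h2 : (p - 1) - 1 = p - 2 := by ring
    rw [h2] at hB
    have hpos : 0 < p := by linarith
    nlinarith [hB, hpos]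

private lemma aux_small (t : ℝ) (ht : 3 ≤ t) (a : ℝ) (ha : 0 ≤ a) (ha1 : a ≤ 1) :
    1 + a ^ t + t * a + t * a ^ (t - 1) ≤ (1 + a) ^ t := by
  rcases eq_or_lt_of_le ha with h0 | hpos
  · subst h0
    rw [Real.zero_rpow (by linarith), Real.zero_rpow (by linarith)]
    simp
  · have h1 : a ^ t ≤ a ^ (3 : ℝ) :=
      Real.rpow_le_rpow_of_exponent_ge hpos ha1 ht
    have h2 : a ^ (t - 1) ≤ a ^ (2 : ℝ) :=
      Real.rpow_le_rpow_of_exponent_ge hpos ha1 (by linarith)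
    have h3 : a ^ (3 : ℝ) = a ^ (3 : ℕ) := by
      rw [← Real.rpow_natCast a 3]; norm_num
    have h4 : a ^ (2 : ℝ) = a ^ (2 : ℕ) := by
      rw [← Real.rpow_natCast a 2]; norm_num
    rw [h3] at h1; rw [h4] at h2
    have hB := bern3 ht ha
    have hC2 : t ≤ t * (t - 1) / 2 := by nlinarith
    have hC3 : (1 : ℝ) ≤ t * (t - 1) * (t - 2) / 6 := by nlinarith
    have ht0 : (0:ℝ) < t := by linarith
    nlinarith [pow_nonneg ha 2, pow_nonneg ha 3, h1, h2,
      mul_le_mul_of_nonneg_left h2 ht0.le]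

/-- For `t ≥ 3` and every `a ≥ 0`, `(1+a)^t ≥ 1 + a^t + t a + t a^{t-1}`. -/
theorem stmt2 (t : ℝ) (ht : 3 ≤ t) (a : ℝ) (ha : 0 ≤ a) :
    1 + a ^ t + t * a + t * a ^ (t - 1) ≤ (1 + a) ^ t := by
  rcases le_total a 1 with h | h
  · exact aux_small t ht a ha h
  · have hpos : 0 < a := lt_of_lt_of_le one_pos h
    set b : ℝ := 1 / a with hb
    have hb0 : 0 ≤ b := by positivity
    have hb1 : b ≤ 1 := by
      rw [hb, div_le_one hpos]; exact h
    have key := aux_small t ht b hb0 hb1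
    have hat : 0 < a ^ t := Real.rpow_pos_of_pos hpos t
    have := mul_le_mul_of_nonneg_left key hat.le
    have e1 : a ^ t * (1 + b) ^ t = (1 + a) ^ t := by
      rw [← Real.mul_rpow hpos.le (by positivity)]
      congr 1
      rw [hb]
      field_simp
      ring
    have e2 : a ^ t * b ^ t = 1 := by
      rw [← Real.mul_rpow hpos.le hb0, hb, mul_one_div, div_self hpos.ne',
        Real.one_rpow]
    have e3 : a ^ t * (t * b) = t * a ^ (t - 1) := by
      rw [hb, Real.rpow_sub hpos]
      field_simp
      rw [Real.rpow_one]
    have e4 : a ^ t * (t * b ^ (t - 1)) = t * a := by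
      rw [hb, one_div, Real.inv_rpow hpos.le, ← Real.rpow_neg hpos.le,
        ← mul_assoc, mul_comm (a ^ t) t, mul_assoc,
        ← Real.rpow_add hpos]
      norm_num
    calc 1 + a ^ t + t * a + t * a ^ (t - 1)
        = a ^ t * (1 + b ^ t + t * b + t * b ^ (t - 1)) := by
          rw [mul_add, mul_add, mul_add, mul_one, e2, e3, e4]; ring
      _ ≤ a ^ t * (1 + b) ^ t := this
      _ = (1 + a) ^ t := e1
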